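/- arXiv:2305.14667 — 2 statements merged into one kernel-verified Lean document; each statement's English description precedes it below -/
import Mathlib

section
/- Let 0 < α < 1 be irrational and let c be a real number. If c · cos(nπα) · (2 sin(nπα))^(N-1) tends to 0 as n → ∞ (over natural numbers n), where N ≥ 1 is a fixed positive integer, then c = 0. -/
open Filter Real

private lemma dense_one_alpha (α : ℝ) (hirr : Irrational α) :
    Dense ((AddSubgroup.closure ({1, α} : Set ℝ) : AddSubgroup ℝ) : Set ℝ) := by
  rcases AddSubgroup.dense_or_cyclic (AddSubgroup.closure ({1, α} : Set ℝ)) with hd | ⟨a, ha⟩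
  · exact hd
  · exfalso
    have h1 : (1 : ℝ) ∈ AddSubgroup.closure ({1, α} : Set ℝ) :=
      AddSubgroup.subset_closure (by simp)
    have h2 : α ∈ AddSubgroup.closure ({1, α} : Set ℝ) :=
      AddSubgroup.subset_closure (by simp)
    rw [ha, AddSubgroup.mem_closure_singleton] at h1 h2
    obtain ⟨n, hn⟩ := h1
    obtain ⟨m, hm⟩ := h2
    rw [zsmul_eq_mul] at hn hm
    have hn0 : (n : ℝ) ≠ 0 := by
      intro h0
      rw [h0, zero_mul] at hn
      norm_num at hn
    refine hirr ⟨(m : ℚ) / (n : ℚ), ?_⟩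
    push_cast
    rw [div_eq_iff hn0, ← hm, mul_assoc, mul_comm a, hn, mul_one]

private lemma freq_aux (α : ℝ) (hirr : Irrational α) (M : ℕ) :
    ∃ n : ℕ, M ≤ n ∧ (Int.fract ((n : ℝ) * α) ∈ Set.Ioo (1/8 : ℝ) (3/8) ∨
      Int.fract ((n : ℝ) * α) ∈ Set.Ioo (5/8 : ℝ) (7/8)) := by
  have key : ∀ k : ℕ, 1 ≤ k → Irrational (Int.fract ((k : ℝ) * α)) := by
    intro k hk
    have h1 : Irrational ((k : ℝ) * α) := hirr.natCast_mul (by omega)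
    have h2 : Int.fract ((k : ℝ) * α) = (k : ℝ) * α - (⌊(k : ℝ) * α⌋ : ℤ) := rfl
    rw [h2]
    exact h1.sub_intCast ⌊(k : ℝ) * α⌋
  have hfract_ne : ∀ k : ℕ, ∀ q : ℚ, (q : ℝ) ≠ 0 → Int.fract ((k : ℝ) * α) ≠ (q : ℝ) := by
    intro k q hq hEq
    rcases Nat.eq_zero_or_pos k with rfl | hk
    · rw [Nat.cast_zero, zero_mul, Int.fract_zero] at hEq
      exact hq hEq.symm
    · exact key k hk ⟨q, hEq.symm⟩
  set g : ℝ → ℝ := fun b => min |b - 1/4| |b - 3/4| with hg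
  set F : Finset ℝ := (Finset.range M).image (fun k : ℕ => Int.fract ((k : ℝ) * α)) with hF
  set F' : Finset ℝ := insert (1/8 : ℝ) (F.image g) with hF'
  have hne : F'.Nonempty := ⟨1/8, Finset.mem_insert_self _ _⟩
  set ε : ℝ := F'.min' hne with hεdef
  have hεpos : 0 < ε := by
    rw [hεdef, Finset.lt_min'_iff]
    intro b hb
    rcases Finset.mem_insert.mp hb with rfl | hb
    · norm_num
    · obtain ⟨v, hv, rfl⟩ := Finset.mem_image.mp hb
      obtain ⟨k, _, rfl⟩ := Finset.mem_image.mp hv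
      have h14 : Int.fract ((k : ℝ) * α) ≠ 1/4 := by
        have := hfract_ne k (1/4) (by norm_num)
        simpa using this
      have h34 : Int.fract ((k : ℝ) * α) ≠ 3/4 := by
        have := hfract_ne k (3/4) (by norm_num)
        simpa using this
      rw [hg]
      simp only [lt_min_iff]
      constructor <;> rw [abs_pos, sub_ne_zero] <;> assumption
  have hεle : ε ≤ 1/8 := Finset.min'_le _ _ (Finset.mem_insert_self _ _)
  -- density gives an element of ℤ + ℤα near 1/4
  have hd := dense_one_alpha α hirr
  obtain ⟨s, hsS, hs⟩ := Metric.mem_closure_iff.mp (hd (1/4 : ℝ)) ε hεpos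
  rw [SetLike.mem_coe, AddSubgroup.mem_closure_pair] at hsS
  obtain ⟨m, n, hmn⟩ := hsS
  rw [zsmul_eq_mul, zsmul_eq_mul, mul_one] at hmn
  have hdist : |s - 1/4| < ε := by
    rw [Real.dist_eq, abs_sub_comm] at hs
    exact hs
  have hsIoo : s ∈ Set.Ioo (1/8 : ℝ) (3/8) := by
    rw [abs_lt] at hdist
    constructor <;> [linarith [hdist.1]; linarith [hdist.2]]
  have hfs : Int.fract ((n : ℝ) * α) = s := by
    have hx : (n : ℝ) * α = s - (m : ℝ) := by linarith [hmn]
    rw [hx, Int.fract_sub_intCast, Int.fract_eq_self.mpr ⟨le_of_lt (by linarith [hsIoo.1]),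
      by linarith [hsIoo.2]⟩]
  have hn0 : n ≠ 0 := by
    rintro rfl
    rw [Int.cast_zero, zero_mul, Int.fract_zero] at hfs
    linarith [hsIoo.1, hfs]
  -- helper: membership below M would contradict ε bound
  have hnotmem : ∀ k : ℕ, k < M → ∀ b : ℝ, Int.fract ((k : ℝ) * α) = b → ε ≤ g b := by
    intro k hk b hb
    apply Finset.min'_le
    rw [hF']
    refine Finset.mem_insert_of_mem (Finset.mem_image.mpr ⟨b, ?_, rfl⟩)
    exact Finset.mem_image.mpr ⟨k, Finset.mem_range.mpr hk, hb⟩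
  rcases lt_or_gt_of_ne hn0 with hneg | hpos
  · -- n < 0 : use n' = (-n).toNat, fract = 1 - s
    set n' : ℕ := (-n).toNat with hn'
    have hcast : ((n' : ℤ) : ℝ) = -(n : ℝ) := by
      rw [hn', Int.toNat_of_nonneg (by omega)]
      push_cast
      ring
    have hfneq : Int.fract ((n' : ℝ) * α) = 1 - s := by
      have : ((n' : ℕ) : ℝ) = -(n : ℝ) := by exact_mod_cast hcast
      rw [this, neg_mul, Int.fract_neg (by rw [hfs]; intro h0; linarith [hsIoo.1]), hfs]
    have hMn' : M ≤ n' := by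
      by_contra hlt
      push_neg at hlt
      have := hnotmem n' hlt (1 - s) hfneq
      have hle : g (1 - s) ≤ |(1 - s) - 3/4| := min_le_right _ _
      have heq : |(1 - s) - 3/4| = |s - 1/4| := by
        rw [abs_sub_comm]
        congr 1
        ring
      linarith [hdist]
    refine ⟨n', hMn', Or.inr ?_⟩
    rw [hfneq]
    exact ⟨by linarith [hsIoo.2], by linarith [hsIoo.1]⟩
  · -- n > 0
    set n' : ℕ := n.toNat with hn'
    have hcast : ((n' : ℕ) : ℝ) = (n : ℝ) := by
      rw [hn']
      exact_mod_cast Int.toNat_of_nonneg (by omega)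
    have hfneq : Int.fract ((n' : ℝ) * α) = s := by rw [hcast, hfs]
    have hMn' : M ≤ n' := by
      by_contra hlt
      push_neg at hlt
      have := hnotmem n' hlt s hfneq
      have hle : g s ≤ |s - 1/4| := min_le_left _ _
      linarith [hdist]
    exact ⟨n', hMn', Or.inl (hfneq ▸ hsIoo)⟩

private lemma bound_aux {f : ℝ} (hf : f ∈ Set.Ioo (1/8 : ℝ) (3/8)) :
    Real.cos (3*π/8) ≤ |Real.cos (π * f)| ∧ Real.sin (π/8) ≤ |Real.sin (π * f)| := by
  have hπ := Real.pi_pos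
  obtain ⟨hf1, hf2⟩ := hf
  constructor
  · refine le_trans (Real.cos_le_cos_of_nonneg_of_le_pi (by nlinarith) (by linarith) (by nlinarith))
      (le_abs_self _)
  · refine le_trans (Real.sin_le_sin_of_le_of_le_pi_div_two (by linarith) (by nlinarith)
      (by nlinarith)) (le_abs_self _)

private lemma bound_both {f : ℝ} (hf : f ∈ Set.Ioo (1/8 : ℝ) (3/8) ∨ f ∈ Set.Ioo (5/8 : ℝ) (7/8)) :
    Real.cos (3*π/8) ≤ |Real.cos (π * f)| ∧ Real.sin (π/8) ≤ |Real.sin (π * f)| := by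
  rcases hf with hf | hf
  · exact bound_aux hf
  · have hg : (1 - f) ∈ Set.Ioo (1/8 : ℝ) (3/8) := ⟨by linarith [hf.2], by linarith [hf.1]⟩
    have h1 : π * f = π - π * (1 - f) := by ring
    rw [h1, Real.cos_pi_sub, Real.sin_pi_sub, abs_neg]
    exact bound_aux hg

private lemma abs_cos_sin_fract (x : ℝ) :
    |Real.cos (π * x)| = |Real.cos (π * Int.fract x)| ∧
    |Real.sin (π * x)| = |Real.sin (π * Int.fract x)| := by
  have hx : π * x = (⌊x⌋ : ℝ) * π + π * Int.fract x := by
    rw [Int.fract]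
    ring
  rw [hx]
  constructor
  · rw [Real.cos_add, Real.sin_int_mul_pi, zero_mul, sub_zero, abs_mul,
      Real.abs_cos_int_mul_pi, one_mul]
  · rw [Real.sin_add, Real.sin_int_mul_pi, zero_mul, zero_add, abs_mul,
      Real.abs_cos_int_mul_pi, one_mul]

theorem eq_zero_of_tendsto_cos_sin_pow_irrational
    (α : ℝ) (hα0 : 0 < α) (hα1 : α < 1) (hirr : Irrational α)
    (N : ℕ) (hN : 1 ≤ N) (c : ℝ)
    (h : Tendsto (fun n : ℕ =>
        c * Real.cos (n * Real.pi * α) * (2 * Real.sin (n * Real.pi * α)) ^ (N - 1))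
      atTop (nhds 0)) :
    c = 0 := by
  by_contra hc
  have hπ := Real.pi_pos
  have hcos38 : 0 < Real.cos (3*π/8) :=
    Real.cos_pos_of_mem_Ioo ⟨by linarith, by linarith⟩
  have hsin8 : 0 < Real.sin (π/8) :=
    Real.sin_pos_of_pos_of_lt_pi (by linarith) (by linarith)
  set δ : ℝ := |c| * Real.cos (3*π/8) * (2 * Real.sin (π/8)) ^ (N-1) with hδdef
  have hδpos : 0 < δ := by
    have := abs_pos.mpr hc
    positivity
  obtain ⟨M, hM⟩ := Metric.tendsto_atTop.mp h δ hδpos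
  obtain ⟨n, hnM, hcase⟩ := freq_aux α hirr M
  have hlt : |c * Real.cos (n * π * α) * (2 * Real.sin (n * π * α)) ^ (N - 1)| < δ := by
    have := hM n hnM
    rwa [Real.dist_eq, sub_zero] at this
  set x : ℝ := (n : ℝ) * α with hxdef
  have harg : (n : ℝ) * π * α = π * x := by rw [hxdef]; ring
  have hb := bound_both hcase
  have hfr := abs_cos_sin_fract x
  have hcosb : Real.cos (3*π/8) ≤ |Real.cos (π * x)| := hfr.1 ▸ (hfr.1.symm ▸ hb.1)
  have hsinb : Real.sin (π/8) ≤ |Real.sin (π * x)| := by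
    rw [hfr.2]; exact hb.2
  have hcosb' : Real.cos (3*π/8) ≤ |Real.cos (π * x)| := by
    rw [hfr.1]; exact hb.1
  have hge : δ ≤ |c * Real.cos (n * π * α) * (2 * Real.sin (n * π * α)) ^ (N - 1)| := by
    rw [harg, abs_mul, abs_mul, abs_pow, abs_mul, abs_two, hδdef]
    gcongr
  linarith
end

section
/- For κ > 0 and √λ = iκ, the function ω₀(-κ²) = (iκ)^N[(-αa/2)^N (sin(iκπ(α+1)/2)+sin(iκπ(α-1)/2))^N + (-a^{-1}/2)^N (sin(iκπ(α+1)/2)-sin(iκπ(α-1)/2))^N] satisfies ω₀(-κ²) = κ^N e^{κNπ(1+α)/2}[(αa/4)^N + (a^{-1}/4)^N](1+o(1)) as κ → +∞. -/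
open Filter Complex

theorem omega0_asymptotics (a α : ℝ) (ha : 0 < a) (hα0 : 0 < α) (hα1 : α < 1)
    (N : ℕ) (hN : 1 ≤ N) :
    Tendsto (fun κ : ℝ =>
        ((Complex.I * κ) ^ N *
            (((-(α * a) : ℂ) / 2) ^ N *
                (Complex.sin (Complex.I * κ * Real.pi * (α + 1) / 2) +
                  Complex.sin (Complex.I * κ * Real.pi * (α - 1) / 2)) ^ N +
              ((-(a : ℂ)⁻¹) / 2) ^ N *
                (Complex.sin (Complex.I * κ * Real.pi * (α + 1) / 2) -
                  Complex.sin (Complex.I * κ * Real.pi * (α - 1) / 2)) ^ N)) /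
          ((κ : ℂ) ^ N * Complex.exp (κ * N * Real.pi * (1 + α) / 2) *
            (((α * a / 4 : ℝ) : ℂ) ^ N + ((a⁻¹ / 4 : ℝ) : ℂ) ^ N)))
      atTop (nhds 1) := by
  have hπ := Real.pi_pos
  set π := Real.pi with hπdef
  -- the correction factors
  set G : ℝ → ℝ := fun κ =>
    1 - Real.exp (-(κ * π * (α + 1))) + Real.exp (-(κ * π)) - Real.exp (-(κ * π * α)) with hGdef
  set H : ℝ → ℝ := fun κ =>
    1 - Real.exp (-(κ * π * (α + 1))) - Real.exp (-(κ * π)) + Real.exp (-(κ * π * α)) with hHdef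
  -- each exponential tends to 0
  have hexp : ∀ c : ℝ, 0 < c →
      Tendsto (fun κ : ℝ => Real.exp (-(κ * c))) atTop (nhds 0) := by
    intro c hc
    have h1 : Tendsto (fun κ : ℝ => -(κ * c)) atTop atBot := by
      exact tendsto_neg_atTop_atBot.comp (tendsto_id.atTop_mul_const hc)
    exact Real.tendsto_exp_atBot.comp h1
  have hG : Tendsto G atTop (nhds 1) := by
    have h1 := hexp (π * (α + 1)) (by positivity)
    have h2 := hexp π hπ
    have h3 := hexp (π * α) (by positivity)
    have : Tendsto G atTop (nhds (1 - 0 + 0 - 0)) := by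
      apply Tendsto.sub
      apply Tendsto.add
      apply Tendsto.sub tendsto_const_nhds
      · simpa [mul_assoc] using h1
      · simpa using h2
      · simpa [mul_assoc] using h3
    simpa using this
  have hH : Tendsto H atTop (nhds 1) := by
    have h1 := hexp (π * (α + 1)) (by positivity)
    have h2 := hexp π hπ
    have h3 := hexp (π * α) (by positivity)
    have : Tendsto H atTop (nhds (1 - 0 - 0 + 0)) := by
      apply Tendsto.add
      apply Tendsto.sub
      apply Tendsto.sub tendsto_const_nhds
      · simpa [mul_assoc] using h1
      · simpa using h2
      · simpa [mul_assoc] using h3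
    simpa using this
  set C : ℂ := ((α * a / 4 : ℝ) : ℂ) ^ N + ((a⁻¹ / 4 : ℝ) : ℂ) ^ N with hCdef
  have hCpos : (0 : ℝ) < (α * a / 4) ^ N + (a⁻¹ / 4) ^ N := by positivity
  have hCreal : C = (((α * a / 4) ^ N + (a⁻¹ / 4) ^ N : ℝ) : ℂ) := by rw [hCdef]; norm_cast
  have hC : C ≠ 0 := by
    rw [hCreal]
    exact_mod_cast hCpos.ne'
  -- the limit of the simplified expression
  have htends : Tendsto (fun κ : ℝ =>
      (((α * a / 4 : ℝ) : ℂ) ^ N * ((G κ : ℝ) : ℂ) ^ N +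
        ((a⁻¹ / 4 : ℝ) : ℂ) ^ N * ((H κ : ℝ) : ℂ) ^ N) / C) atTop (nhds 1) := by
    have hGc : Tendsto (fun κ : ℝ => ((G κ : ℝ) : ℂ)) atTop (nhds 1) := by
      have := (Complex.continuous_ofReal.tendsto 1).comp hG
      simpa [Function.comp_def] using this
    have hHc : Tendsto (fun κ : ℝ => ((H κ : ℝ) : ℂ)) atTop (nhds 1) := by
      have := (Complex.continuous_ofReal.tendsto 1).comp hH
      simpa [Function.comp_def] using this
    have : Tendsto (fun κ : ℝ =>
        (((α * a / 4 : ℝ) : ℂ) ^ N * ((G κ : ℝ) : ℂ) ^ N +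
          ((a⁻¹ / 4 : ℝ) : ℂ) ^ N * ((H κ : ℝ) : ℂ) ^ N) / C) atTop
        (nhds ((((α * a / 4 : ℝ) : ℂ) ^ N * 1 ^ N +
          ((a⁻¹ / 4 : ℝ) : ℂ) ^ N * 1 ^ N) / C)) := by
      exact (((tendsto_const_nhds.mul (hGc.pow N)).add
        (tendsto_const_nhds.mul (hHc.pow N))).div tendsto_const_nhds hC)
    simp only [one_pow, mul_one] at this
    rwa [← hCdef, div_self hC] at this
  -- eventual equality
  apply htends.congr'
  filter_upwards [eventually_gt_atTop (0 : ℝ)] with κ hκ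
  set E : ℂ := Complex.exp ((κ * π * (α + 1) / 2 : ℝ) : ℂ) with hEdef
  set p : ℂ := Complex.exp ((κ * π * α / 2 : ℝ) : ℂ) with hpdef
  set q : ℂ := Complex.exp ((κ * π / 2 : ℝ) : ℂ) with hqdef
  have hp : p ≠ 0 := Complex.exp_ne_zero _
  have hq : q ≠ 0 := Complex.exp_ne_zero _
  have hE : E = p * q := by
    rw [hEdef, hpdef, hqdef, ← Complex.exp_add]
    congr 1; push_cast; ring
  have hE2 : Complex.exp ((-(κ * π * (α + 1)) : ℝ) : ℂ) = (p * q * (p * q))⁻¹ := by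
    rw [show ((-(κ * π * (α + 1)) : ℝ) : ℂ) =
      -(((κ * π * α / 2 : ℝ) : ℂ) + ((κ * π / 2 : ℝ) : ℂ) +
        (((κ * π * α / 2 : ℝ) : ℂ) + ((κ * π / 2 : ℝ) : ℂ))) by push_cast; ring,
      Complex.exp_neg, Complex.exp_add, Complex.exp_add, ← hpdef, ← hqdef]
  have hE3 : Complex.exp ((-(κ * π) : ℝ) : ℂ) = (q * q)⁻¹ := by
    rw [show ((-(κ * π) : ℝ) : ℂ) = -(((κ * π / 2 : ℝ) : ℂ) + ((κ * π / 2 : ℝ) : ℂ)) by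
      push_cast; ring, Complex.exp_neg, Complex.exp_add, ← hqdef]
  have hE4 : Complex.exp ((-(κ * π * α) : ℝ) : ℂ) = (p * p)⁻¹ := by
    rw [show ((-(κ * π * α) : ℝ) : ℂ) = -(((κ * π * α / 2 : ℝ) : ℂ) + ((κ * π * α / 2 : ℝ) : ℂ)) by
      push_cast; ring, Complex.exp_neg, Complex.exp_add, ← hpdef]
  -- sin expansions
  have e1 : Complex.I * κ * π * (α + 1) / 2 = ((κ * π * (α + 1) / 2 : ℝ) : ℂ) * Complex.I := by
    push_cast; ring
  have e2 : Complex.I * κ * π * (α - 1) / 2 = ((κ * π * (α - 1) / 2 : ℝ) : ℂ) * Complex.I := by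
    push_cast; ring
  have hEx2 : Complex.exp ((κ * π * (α - 1) / 2 : ℝ) : ℂ) = p * q⁻¹ := by
    rw [show ((κ * π * (α - 1) / 2 : ℝ) : ℂ) =
      ((κ * π * α / 2 : ℝ) : ℂ) + -((κ * π / 2 : ℝ) : ℂ) by push_cast; ring,
      Complex.exp_add, Complex.exp_neg, ← hpdef, ← hqdef]
  have hs1 : Complex.sin (Complex.I * κ * π * (α + 1) / 2) +
      Complex.sin (Complex.I * κ * π * (α - 1) / 2) =
      Complex.I / 2 * E * ((G κ : ℝ) : ℂ) := by
    rw [e1, e2, Complex.sin_mul_I, Complex.sin_mul_I, Complex.sinh, Complex.sinh]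
    simp only [hGdef, Complex.ofReal_sub, Complex.ofReal_add, Complex.ofReal_one,
      Complex.ofReal_exp, Complex.exp_neg]
    rw [hE2, hE3, hE4, hEx2, ← hEdef, hE]
    simp only [mul_inv]
    field_simp [hp, hq]
    have hpq : p⁻¹ ^ 4 * q⁻¹ ^ 4 * (p ^ 4 * q ^ 4) = 1 := by
      rw [inv_pow, inv_pow, ← mul_inv]
      exact inv_mul_cancel₀ (mul_ne_zero (pow_ne_zero _ hp) (pow_ne_zero _ hq))
    ring
  have hs2 : Complex.sin (Complex.I * κ * π * (α + 1) / 2) -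
      Complex.sin (Complex.I * κ * π * (α - 1) / 2) =
      Complex.I / 2 * E * ((H κ : ℝ) : ℂ) := by
    rw [e1, e2, Complex.sin_mul_I, Complex.sin_mul_I, Complex.sinh, Complex.sinh]
    simp only [hHdef, Complex.ofReal_sub, Complex.ofReal_add, Complex.ofReal_one,
      Complex.ofReal_exp, Complex.exp_neg]
    rw [hE2, hE3, hE4, hEx2, ← hEdef, hE]
    simp only [mul_inv]
    field_simp [hp, hq]
    have hpq : p⁻¹ ^ 4 * q⁻¹ ^ 4 * (p ^ 4 * q ^ 4) = 1 := by
      rw [inv_pow, inv_pow, ← mul_inv]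
      exact inv_mul_cancel₀ (mul_ne_zero (pow_ne_zero _ hp) (pow_ne_zero _ hq))
    ring
  -- denominator exponential
  have hden : Complex.exp ((κ : ℂ) * N * π * (1 + α) / 2) = E ^ N := by
    rw [hEdef, ← Complex.exp_nat_mul]
    congr 1; push_cast; ring
  rw [hs1, hs2, hden]
  -- base equalities
  have b1 : Complex.I * (κ : ℂ) * ((-(α * a) : ℂ) / 2) * (Complex.I / 2 * E * ((G κ : ℝ) : ℂ)) =
      (κ : ℂ) * E * ((α * a / 4 : ℝ) : ℂ) * ((G κ : ℝ) : ℂ) := by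
    push_cast
    linear_combination (-(↑α * ↑a / 4) * ↑κ * E * ((G κ : ℝ) : ℂ)) * Complex.I_sq
  have b2 : Complex.I * (κ : ℂ) * ((-(a : ℂ)⁻¹) / 2) * (Complex.I / 2 * E * ((H κ : ℝ) : ℂ)) =
      (κ : ℂ) * E * ((a⁻¹ / 4 : ℝ) : ℂ) * ((H κ : ℝ) : ℂ) := by
    push_cast
    linear_combination (-((↑a)⁻¹ / 4) * ↑κ * E * ((H κ : ℝ) : ℂ)) * Complex.I_sq
  have hκC : (κ : ℂ) ≠ 0 := by exact_mod_cast hκ.ne'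
  have hEne : E ≠ 0 := Complex.exp_ne_zero _
  have hnum : (Complex.I * κ) ^ N *
      (((-(α * a) : ℂ) / 2) ^ N * (Complex.I / 2 * E * ((G κ : ℝ) : ℂ)) ^ N +
        ((-(a : ℂ)⁻¹) / 2) ^ N * (Complex.I / 2 * E * ((H κ : ℝ) : ℂ)) ^ N) =
      (κ : ℂ) ^ N * E ^ N *
      (((α * a / 4 : ℝ) : ℂ) ^ N * ((G κ : ℝ) : ℂ) ^ N +
        ((a⁻¹ / 4 : ℝ) : ℂ) ^ N * ((H κ : ℝ) : ℂ) ^ N) := by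
    calc (Complex.I * κ) ^ N *
        (((-(α * a) : ℂ) / 2) ^ N * (Complex.I / 2 * E * ((G κ : ℝ) : ℂ)) ^ N +
          ((-(a : ℂ)⁻¹) / 2) ^ N * (Complex.I / 2 * E * ((H κ : ℝ) : ℂ)) ^ N) =
        (Complex.I * (κ : ℂ) * ((-(α * a) : ℂ) / 2) *
          (Complex.I / 2 * E * ((G κ : ℝ) : ℂ))) ^ N +
        (Complex.I * (κ : ℂ) * ((-(a : ℂ)⁻¹) / 2) *
          (Complex.I / 2 * E * ((H κ : ℝ) : ℂ))) ^ N := by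
          simp only [mul_pow]; ring
      _ = ((κ : ℂ) * E * ((α * a / 4 : ℝ) : ℂ) * ((G κ : ℝ) : ℂ)) ^ N +
          ((κ : ℂ) * E * ((a⁻¹ / 4 : ℝ) : ℂ) * ((H κ : ℝ) : ℂ)) ^ N := by rw [b1, b2]
      _ = _ := by simp only [mul_pow]; ring
  rw [hnum]
  rw [show (κ : ℂ) ^ N * E ^ N * (((α * a / 4 : ℝ) : ℂ) ^ N * ((G κ : ℝ) : ℂ) ^ N +
      ((a⁻¹ / 4 : ℝ) : ℂ) ^ N * ((H κ : ℝ) : ℂ) ^ N) / ((κ : ℂ) ^ N * E ^ N * C) =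
      ((((α * a / 4 : ℝ) : ℂ) ^ N * ((G κ : ℝ) : ℂ) ^ N +
      ((a⁻¹ / 4 : ℝ) : ℂ) ^ N * ((H κ : ℝ) : ℂ) ^ N)) / C from
    mul_div_mul_left _ _ (by exact mul_ne_zero (pow_ne_zero _ hκC) (pow_ne_zero _ hEne))]
end
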